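/- (Spreading lemma) Let F : V → ℝ^k be built from k orthonormal eigenvectors as F(u) = (f_1(u),...,f_k(u)) with e_i = D^{1/2} f_i orthonormal. Fix 0 < Δ ≤ 2^{-1/2}. Then for any vertex set S whose diameter under the mirror radial projection distance d_M is less than Δ, the mass satisfies M(S) = Σ_{w∈S} d(w)‖F(w)‖^2 ≤ 1/(1-Δ^2), i.e. M(S) ≤ M(V)/(k(1-Δ^2)). -/

import Mathlib

open BigOperators Classical

/-- The mirror radial projection distance: `min(‖F'(u)-F'(v)‖, ‖F'(u)+F'(v)‖)` where
`F'(u) = F(u)/‖F(u)‖`, and `1` if either point maps to the origin. -/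

noncomputable def dM {n k : ℕ} (F : Fin n → EuclideanSpace ℝ (Fin k))
    (u v : Fin n) : ℝ :=
  if F u = 0 ∨ F v = 0 then 1
  else min ‖(‖F u‖⁻¹ • F u) - (‖F v‖⁻¹ • F v)‖ ‖(‖F u‖⁻¹ • F u) + (‖F v‖⁻¹ • F v)‖

/-- Spreading lemma: if `F` is the spectral embedding built from `k` orthonormal
vectors `e_i = D^{1/2} f_i` and `0 < Δ ≤ 2^{-1/2}`, then any vertex set `S` of
`d_M`-diameter less than `Δ` has mass at most `1/(1-Δ²) = M(V)/(k(1-Δ²))`. -/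
theorem stmt6 {n k : ℕ} (hk : 0 < k) (w : Fin n → Fin n → ℝ)
    (hsym : ∀ i j, w i j = w j i) (hnonneg : ∀ i j, 0 ≤ w i j)
    (d : Fin n → ℝ) (hd : ∀ i, d i = ∑ j, w i j) (hdpos : ∀ i, 0 < d i)
    (e : Fin k → Fin n → ℝ)
    (horth : ∀ i j, (∑ a, e i a * e j a) = if i = j then 1 else 0)
    (f : Fin k → Fin n → ℝ) (hf : ∀ i a, f i a = e i a / Real.sqrt (d a))
    (F : Fin n → EuclideanSpace ℝ (Fin k))
    (hF : ∀ u, F u = (WithLp.equiv 2 (Fin k → ℝ)).symm (fun i => f i u))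
    (Δ : ℝ) (hΔ0 : 0 < Δ) (hΔ1 : Δ ≤ (Real.sqrt 2)⁻¹)
    (S : Finset (Fin n)) (hdiam : ∀ u ∈ S, ∀ v ∈ S, dM F u v < Δ) :
    (∑ u ∈ S, d u * ‖F u‖ ^ 2) ≤ 1 / (1 - Δ ^ 2) := by
  have hsqrt2 : (1:ℝ) ≤ Real.sqrt 2 := by
    rw [show (1:ℝ) = Real.sqrt 1 from (Real.sqrt_one).symm]
    exact Real.sqrt_le_sqrt (by norm_num)
  have hΔsq : Δ ^ 2 ≤ 1 / 2 := by
    have h1 : Δ ^ 2 ≤ ((Real.sqrt 2)⁻¹) ^ 2 := by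
      apply pow_le_pow_left₀ hΔ0.le hΔ1
    have h2 : ((Real.sqrt 2)⁻¹) ^ 2 = 1 / 2 := by
      rw [inv_pow, Real.sq_sqrt (by norm_num : (0:ℝ) ≤ 2)]
      norm_num
    linarith
  have hpos : (0:ℝ) < 1 - Δ ^ 2 := by linarith
  rcases S.eq_empty_or_nonempty with rfl | ⟨u₀, hu₀⟩
  · simpa using div_nonneg zero_le_one hpos.le
  have hΔ1' : Δ < 1 := by nlinarith
  have hFne : ∀ u ∈ S, F u ≠ 0 := by
    intro u hu hFu
    have h := hdiam u hu u hu
    rw [dM, if_pos (Or.inl hFu)] at h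
    linarith
  set x : EuclideanSpace ℝ (Fin k) := ‖F u₀‖⁻¹ • F u₀ with hxdef
  have hx : ‖x‖ = 1 := norm_smul_inv_norm (hFne u₀ hu₀)
  -- key inner product estimate
  have key : ∀ v ∈ S, (1 - Δ ^ 2) * ‖F v‖ ^ 2 ≤ (inner ℝ x (F v) : ℝ) ^ 2 := by
    intro v hv
    have hFv := hFne v hv
    set y : EuclideanSpace ℝ (Fin k) := ‖F v‖⁻¹ • F v with hydef
    have hy : ‖y‖ = 1 := norm_smul_inv_norm hFv
    have hdm := hdiam u₀ hu₀ v hv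
    rw [dM, if_neg (by push_neg; exact ⟨hFne u₀ hu₀, hFv⟩)] at hdm
    set t : ℝ := inner ℝ x y with htdef
    have hsub : ‖x - y‖ ^ 2 = 2 - 2 * t := by
      rw [norm_sub_sq_real, hx, hy]; ring
    have hadd : ‖x + y‖ ^ 2 = 2 + 2 * t := by
      rw [norm_add_sq_real, hx, hy]; ring
    have ht : (1 - Δ ^ 2) ≤ t ^ 2 := by
      rcases min_lt_iff.mp hdm with h | h
      · have h2 : ‖x - y‖ ^ 2 < Δ ^ 2 := by
          apply pow_lt_pow_left₀ h (norm_nonneg _)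
          norm_num
        rw [hsub] at h2
        nlinarith
      · have h2 : ‖x + y‖ ^ 2 < Δ ^ 2 := by
          apply pow_lt_pow_left₀ h (norm_nonneg _)
          norm_num
        rw [hadd] at h2
        nlinarith
    have hinner : (inner ℝ x (F v) : ℝ) = ‖F v‖ * t := by
      rw [htdef, hydef, real_inner_smul_right,
        ← mul_assoc, mul_inv_cancel₀ (norm_ne_zero_iff.mpr hFv), one_mul]
    rw [hinner, mul_pow]
    have hnn : (0:ℝ) ≤ ‖F v‖ ^ 2 := by positivity
    nlinarith
  -- the spectral identity
  have hFapp : ∀ u i, (F u) i = e i u / Real.sqrt (d u) := by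
    intro u i
    rw [hF]
    simp [hf]
  have hmain : ∑ u, d u * (inner ℝ x (F u) : ℝ) ^ 2 = 1 := by
    have hg : ∀ u, d u * (inner ℝ x (F u) : ℝ) ^ 2 = (∑ i, x i * e i u) ^ 2 := by
      intro u
      have hinner : (inner ℝ x (F u) : ℝ) = ∑ i, x i * (F u) i := by
        simp [PiLp.inner_apply, RCLike.inner_apply, mul_comm]
      have hsd : Real.sqrt (d u) ^ 2 = d u := Real.sq_sqrt (hdpos u).le
      have hsdne : Real.sqrt (d u) ≠ 0 := ne_of_gt (Real.sqrt_pos.mpr (hdpos u))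
      have : (∑ i, x i * e i u) = Real.sqrt (d u) * (inner ℝ x (F u) : ℝ) := by
        rw [hinner, Finset.mul_sum]
        apply Finset.sum_congr rfl
        intro i _
        rw [hFapp]
        field_simp
      rw [this, mul_pow, hsd]
    calc ∑ u, d u * (inner ℝ x (F u) : ℝ) ^ 2
        = ∑ u, (∑ i, x i * e i u) ^ 2 := by
          exact Finset.sum_congr rfl (fun u _ => hg u)
      _ = ∑ u, ∑ i, ∑ j, (x i * e i u) * (x j * e j u) := by
          apply Finset.sum_congr rfl
          intro u _
          rw [sq, Finset.sum_mul_sum]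
      _ = ∑ i, ∑ j, (x i * x j) * ∑ u, e i u * e j u := by
          rw [Finset.sum_comm]
          apply Finset.sum_congr rfl
          intro i _
          rw [Finset.sum_comm]
          apply Finset.sum_congr rfl
          intro j _
          rw [Finset.mul_sum]
          apply Finset.sum_congr rfl
          intro u _
          ring
      _ = ∑ i, x i * x i := by
          apply Finset.sum_congr rfl
          intro i _
          rw [Finset.sum_congr rfl (fun j _ => by rw [horth i j])]
          simp [mul_ite]
      _ = 1 := by
          have h : (inner ℝ x x : ℝ) = ∑ i, x i * x i := by
            rw [PiLp.inner_apply]; simp only [RCLike.inner_apply, conj_trivial]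
          rw [← h, real_inner_self_eq_norm_sq, hx]; norm_num
  have h1 : (1 - Δ ^ 2) * ∑ u ∈ S, d u * ‖F u‖ ^ 2
      ≤ ∑ u ∈ S, d u * (inner ℝ x (F u) : ℝ) ^ 2 := by
    rw [Finset.mul_sum]
    apply Finset.sum_le_sum
    intro u hu
    calc (1 - Δ ^ 2) * (d u * ‖F u‖ ^ 2) = d u * ((1 - Δ ^ 2) * ‖F u‖ ^ 2) := by ring
      _ ≤ d u * (inner ℝ x (F u) : ℝ) ^ 2 :=
          mul_le_mul_of_nonneg_left (key u hu) (hdpos u).le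
  have h2 : ∑ u ∈ S, d u * (inner ℝ x (F u) : ℝ) ^ 2 ≤ 1 := by
    rw [← hmain]
    apply Finset.sum_le_sum_of_subset_of_nonneg (Finset.subset_univ S)
    intro u _ _
    have := (hdpos u).le
    positivity
  rw [le_div_iff₀ hpos]
  nlinarith [h1, h2]
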